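/- arXiv:1004.5136 — 2 statements merged into one kernel-verified Lean document; each statement's English description precedes it below -/
import Mathlib

section
/- Let J: ℝ → ℝ be continuous and 1-periodic. For N ∈ ℕ with N ≥ 1 and h = 1/N, let A_N be the N×N matrix with entries a_{j,i} = h·J(|j−i|·h) for j ≠ i and a_{j,j} = h·[J(0) − ∑_{r=1}^{N} J(|j−r|·h)], and for fixed k ∈ ℕ, k ≥ 1, let λ_k^{(N)} = −(a_{1,1} + a_{1,2} W_k + ⋯ + a_{1,N} W_k^{N−1}) with W_k = exp(2πik/N) denote the k-th eigenvalue of −A_N. Then lim_{N→∞} λ_k^{(N)} = ∫₀¹ J(x) dx − ∫₀¹ J(x) exp(2πikx) dx. -/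
open MeasureTheory Filter

lemma riemann_tendsto (f : ℝ → ℂ) (hf : Continuous f) :
    Tendsto (fun N : ℕ => ∑ m : Fin N, (1/(N:ℝ)) • f ((m:ℝ)/N)) atTop
      (nhds (∫ x in (0:ℝ)..1, f x)) := by
  rw [Metric.tendsto_atTop]
  intro ε hε
  obtain ⟨δ, hδ, hδf⟩ := Metric.uniformContinuousOn_iff.mp
    ((isCompact_Icc (a := (0:ℝ)) (b := 1)).uniformContinuousOn_of_continuous hf.continuousOn)
    (ε/2) (by positivity)
  obtain ⟨n₀, hn₀⟩ := exists_nat_one_div_lt hδ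
  refine ⟨n₀ + 1, fun N hN => ?_⟩
  have hN1 : 1 ≤ N := le_trans (Nat.le_add_left 1 n₀) hN
  have hNpos : (0:ℝ) < N := by exact_mod_cast hN1
  have hsmall : 1/(N:ℝ) < δ := by
    refine lt_of_le_of_lt ?_ hn₀
    apply one_div_le_one_div_of_le (by positivity)
    exact_mod_cast hN
  have hint : ∫ x in (0:ℝ)..1, f x
      = ∑ m ∈ Finset.range N, ∫ x in ((m:ℝ)/N)..(((m:ℝ)+1)/N), f x := by
    have h := intervalIntegral.sum_integral_adjacent_intervals
      (a := fun j : ℕ => (j:ℝ)/N) (n := N) (μ := volume)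
      (fun j _ => hf.intervalIntegrable _ _)
    simp only [Nat.cast_zero, zero_div, Nat.cast_succ] at h
    rw [div_self hNpos.ne'] at h
    rw [← h]
  rw [dist_eq_norm, hint,
    Fin.sum_univ_eq_sum_range (fun i : ℕ => (1/(N:ℝ)) • f ((i:ℝ)/N)) N,
    ← Finset.sum_sub_distrib]
  have hbound : ∀ m ∈ Finset.range N,
      ‖(1/(N:ℝ)) • f ((m:ℝ)/N) - ∫ x in ((m:ℝ)/N)..(((m:ℝ)+1)/N), f x‖ ≤ (ε/2) * (1/N) := by
    intro m hm
    have hmN : (m:ℝ) + 1 ≤ N := by exact_mod_cast Finset.mem_range.mp hm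
    have hm0 : (0:ℝ) ≤ (m:ℝ) := Nat.cast_nonneg m
    have hle : (m:ℝ)/N ≤ ((m:ℝ)+1)/N := by
      gcongr; linarith

    have hconst : (1/(N:ℝ)) • f ((m:ℝ)/N)
        = ∫ _ in ((m:ℝ)/N)..(((m:ℝ)+1)/N), f ((m:ℝ)/N) := by
      rw [intervalIntegral.integral_const]
      congr 1
      ring
    rw [hconst, ← intervalIntegral.integral_sub (intervalIntegrable_const)
      (hf.intervalIntegrable _ _)]
    have := intervalIntegral.norm_integral_le_of_norm_le_const
      (C := ε/2) (f := fun x => f ((m:ℝ)/N) - f x)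
      (a := (m:ℝ)/N) (b := ((m:ℝ)+1)/N) ?_
    · calc _ ≤ (ε/2) * |((m:ℝ)+1)/N - (m:ℝ)/N| := this
        _ = (ε/2) * (1/N) := by
            congr 1
            rw [abs_of_nonneg (by linarith)]
            ring
    · intro x hx
      rw [Set.uIoc_of_le hle] at hx
      have hx1 : (m:ℝ)/N < x := hx.1
      have hx2 : x ≤ ((m:ℝ)+1)/N := hx.2
      have hxIcc : x ∈ Set.Icc (0:ℝ) 1 := by
        constructor
        · have : (0:ℝ) ≤ (m:ℝ)/N := by positivity
          linarith
        · calc x ≤ ((m:ℝ)+1)/N := hx2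
            _ ≤ 1 := by rw [div_le_one hNpos]; exact hmN
      have hmIcc : (m:ℝ)/N ∈ Set.Icc (0:ℝ) 1 := by
        constructor
        · positivity
        · rw [div_le_one hNpos]; linarith
      have hdist : dist ((m:ℝ)/N) x < δ := by
        rw [Real.dist_eq, abs_of_nonpos (by linarith)]
        have : x - (m:ℝ)/N ≤ 1/N := by
          have : ((m:ℝ)+1)/N - (m:ℝ)/N = 1/N := by ring
          linarith
        linarith
      have := hδf _ hmIcc _ hxIcc hdist
      rw [dist_eq_norm] at this
      exact this.le
  calc ‖∑ m ∈ Finset.range N, ((1/(N:ℝ)) • f ((m:ℝ)/N) - ∫ x in ((m:ℝ)/N)..(((m:ℝ)+1)/N), f x)‖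
      ≤ ∑ m ∈ Finset.range N, ‖(1/(N:ℝ)) • f ((m:ℝ)/N) - ∫ x in ((m:ℝ)/N)..(((m:ℝ)+1)/N), f x‖ :=
        norm_sum_le _ _
    _ ≤ ∑ _m ∈ Finset.range N, (ε/2) * (1/N) := Finset.sum_le_sum hbound
    _ = (N:ℝ) * ((ε/2) * (1/N)) := by rw [Finset.sum_const, Finset.card_range, nsmul_eq_mul]
    _ = ε/2 := by field_simp
    _ < ε := by linarith


/-- Convergence of the k-th eigenvalue of `-A_N` to the eigenvalue of the
limiting nonlocal operator as `N → ∞`. -/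
theorem stmt6 (J : ℝ → ℝ) (hcont : Continuous J) (hper : ∀ x, J (x + 1) = J x)
    (k : ℕ) (hk : 1 ≤ k)
    (lam : ℕ → ℂ)
    (hlam : ∀ N : ℕ, 0 < N → lam N =
      -(∑ m : Fin N,
        (((if (m : ℕ) = 0 then
            (1 / (N : ℝ)) * (J 0 - ∑ r : Fin N, J ((r : ℝ) * (1 / (N : ℝ))))
          else (1 / (N : ℝ)) * J ((m : ℝ) * (1 / (N : ℝ)))) : ℝ) : ℂ) *
        (Complex.exp (2 * (Real.pi : ℂ) * Complex.I * (k : ℂ) / (N : ℂ))) ^ (m : ℕ))) :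
    Filter.Tendsto lam Filter.atTop
      (nhds ((((∫ x in (0:ℝ)..1, J x) : ℝ) : ℂ) -
        ∫ x in (0:ℝ)..1,
          (J x : ℂ) * Complex.exp (2 * (Real.pi : ℂ) * Complex.I * (k : ℂ) * (x : ℂ)))) := by
  set f1 : ℝ → ℂ := fun x => ((J x : ℝ) : ℂ) with hf1def
  set f2 : ℝ → ℂ := fun x =>
    (J x : ℂ) * Complex.exp (2 * (Real.pi : ℂ) * Complex.I * (k : ℂ) * (x : ℂ)) with hf2def
  have hf1 : Continuous f1 := Complex.continuous_ofReal.comp hcont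
  have hf2 : Continuous f2 := by
    apply ((Complex.continuous_ofReal.comp hcont).mul)
    exact Complex.continuous_exp.comp (by continuity)
  have key : ∀ N : ℕ, 0 < N → lam N =
      (∑ m : Fin N, (1/(N:ℝ)) • f1 ((m:ℝ)/N)) - (∑ m : Fin N, (1/(N:ℝ)) • f2 ((m:ℝ)/N)) := by
    intro N hN
    rw [hlam N hN]
    set e : ℂ := Complex.exp (2 * (Real.pi : ℂ) * Complex.I * (k : ℂ) / (N : ℂ)) with hedef
    have hW : ∀ m : ℕ, e ^ m
        = Complex.exp (2 * (Real.pi : ℂ) * Complex.I * (k : ℂ) * ((((m:ℝ)/(N:ℝ)) : ℝ) : ℂ)) := by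
      intro m
      rw [hedef, ← Complex.exp_nat_mul]
      congr 1
      push_cast
      ring
    have h1 : ∀ m : Fin N,
        (((if (m : ℕ) = 0 then
            (1 / (N : ℝ)) * (J 0 - ∑ r : Fin N, J ((r : ℝ) * (1 / (N : ℝ))))
          else (1 / (N : ℝ)) * J ((m : ℝ) * (1 / (N : ℝ)))) : ℝ) : ℂ) * e ^ (m : ℕ)
        = (1/(N:ℝ)) • ((J ((m:ℝ)/N) : ℂ) * e ^ (m:ℕ))
          - (if (m : ℕ) = 0 then ((1/(N:ℝ) : ℝ) : ℂ) * (∑ r : Fin N, ((J ((r:ℝ)/N) : ℝ) : ℂ))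
             else 0) := by
      intro m
      by_cases hm : (m : ℕ) = 0
      · have hm' : ((m : ℕ) : ℝ) = 0 := by exact_mod_cast hm
        simp only [hm, if_true, pow_zero, mul_one, hm', one_div, div_eq_mul_inv, zero_mul,
          Complex.real_smul]
        simp only [Nat.cast_zero, zero_mul]
        push_cast
        ring_nf
        simp only [mul_comm ((N:ℝ)⁻¹)]
      · simp only [hm, if_false, sub_zero, one_div, div_eq_mul_inv, Complex.real_smul]
        push_cast
        ring
    rw [Finset.sum_congr rfl (fun m _ => h1 m), Finset.sum_sub_distrib]
    have h2 : (∑ m : Fin N,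
        (if (m : ℕ) = 0 then ((1/(N:ℝ) : ℝ) : ℂ) * (∑ r : Fin N, ((J ((r:ℝ)/N) : ℝ) : ℂ))
         else 0))
        = ((1/(N:ℝ) : ℝ) : ℂ) * (∑ r : Fin N, ((J ((r:ℝ)/N) : ℝ) : ℂ)) := by
      obtain ⟨M, rfl⟩ := Nat.exists_eq_succ_of_ne_zero hN.ne'
      rw [Fin.sum_univ_succ]
      simp
    rw [h2]
    have h3 : (∑ m : Fin N, (1/(N:ℝ)) • ((J ((m:ℝ)/N) : ℂ) * e ^ (m:ℕ)))
        = ∑ m : Fin N, (1/(N:ℝ)) • f2 ((m:ℝ)/N) := by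
      refine Finset.sum_congr rfl fun m _ => ?_
      rw [hW]
    have h4 : (∑ m : Fin N, (1/(N:ℝ)) • f1 ((m:ℝ)/N))
        = ((1/(N:ℝ) : ℝ) : ℂ) * (∑ r : Fin N, ((J ((r:ℝ)/N) : ℝ) : ℂ)) := by
      rw [← Finset.smul_sum, Complex.real_smul]
    rw [h3, h4]
    ring
  have hIlim : ∫ x in (0:ℝ)..1, f1 x = (((∫ x in (0:ℝ)..1, J x) : ℝ) : ℂ) := by
    rw [hf1def]
    exact intervalIntegral.integral_ofReal
  have hmain := (riemann_tendsto f1 hf1).sub (riemann_tendsto f2 hf2)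
  rw [hIlim] at hmain
  refine hmain.congr' ?_
  filter_upwards [Filter.eventually_ge_atTop 1] with N hN
  exact (key N hN).symm
end

section
/- Let J: ℝ → ℝ be continuous, 1-periodic, nonnegative, with ∫₀¹ J(x) dx = 1, let f(u) = u(1 − u²), and suppose ε > 1. If u: ℝ → ℝ is a bounded, measurable, 1-periodic function satisfying the steady-state equation 0 = ε ∫₀¹ J(x−y)(u(y) − u(x)) dy + f(u(x)) for every x ∈ ℝ, then u is continuous. (The point is that for ε > 1 the map v ↦ εv − f(v) is strictly increasing on ℝ with continuous inverse, while x ↦ ε∫₀¹ J(x−y)u(y) dy is continuous.) -/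
open MeasureTheory Filter

/-- For `ε > 1`, every bounded measurable 1-periodic steady state of the
nonlocal bistable equation with `f(u) = u(1 - u²)` is continuous. -/
theorem stmt13 (J : ℝ → ℝ) (hJc : Continuous J) (hJper : ∀ x, J (x + 1) = J x)
    (hJnn : ∀ x, 0 ≤ J x) (hJnorm : ∫ x in (0:ℝ)..1, J x = 1)
    (ε : ℝ) (hε : 1 < ε)
    (u : ℝ → ℝ) (hum : Measurable u) (hub : ∃ C, ∀ x, |u x| ≤ C)
    (huper : ∀ x, u (x + 1) = u x)
    (hss : ∀ x : ℝ,
      0 = ε * (∫ y in (0:ℝ)..1, J (x - y) * (u y - u x)) + u x * (1 - u x ^ 2)) :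
    Continuous u := by
  obtain ⟨C, hC⟩ := hub
  have hC0 : 0 ≤ C := le_trans (abs_nonneg _) (hC 0)
  have hJper' : Function.Periodic J 1 := hJper
  -- J is bounded
  obtain ⟨M, hM⟩ : ∃ M, ∀ x, |J x| ≤ M := by
    obtain ⟨M, hM⟩ := (isCompact_Icc (a := (0:ℝ)) (b := 1)).exists_bound_of_continuousOn
      hJc.continuousOn
    refine ⟨M, fun x => ?_⟩
    have h1 : J x = J (Int.fract x) := by
      have := hJper'.sub_zsmul_eq (x := x) ⌊x⌋
      simp only [zsmul_eq_mul, mul_one] at this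
      rw [Int.fract, ← this]
    rw [h1]
    have h2 : Int.fract x ∈ Set.Icc (0:ℝ) 1 :=
      ⟨Int.fract_nonneg x, le_of_lt (Int.fract_lt_one x)⟩
    simpa using hM _ h2
  have hM0 : 0 ≤ M := le_trans (abs_nonneg _) (hM 0)
  -- the averaged function
  set g : ℝ → ℝ := fun x => ∫ y in (0:ℝ)..1, J (x - y) * u y with hg_def
  have hgc : Continuous g := by
    apply intervalIntegral.continuous_of_dominated_interval
      (bound := fun _ => M * C)
    · intro x
      exact (((hJc.measurable.comp (measurable_const.sub measurable_id)).mul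
        hum)).aestronglyMeasurable
    · intro x
      filter_upwards with t _ht
      rw [Real.norm_eq_abs, abs_mul]
      exact mul_le_mul (hM _) (hC _) (abs_nonneg _) hM0
    · exact intervalIntegrable_const
    · filter_upwards with t _ht
      exact (hJc.comp (continuous_id.sub continuous_const)).mul continuous_const
  -- the normalization
  have hnorm : ∀ x : ℝ, (∫ y in (0:ℝ)..1, J (x - y)) = 1 := by
    intro x
    rw [intervalIntegral.integral_comp_sub_left J x, sub_zero]
    have h := hJper'.intervalIntegral_add_eq (x - 1) 0
    simp only [sub_add_cancel, zero_add] at h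
    rw [h, hJnorm]
  -- key algebraic identity : (ε - 1) * u x + (u x)^3 = ε * g x
  have key : ∀ x : ℝ, (ε - 1) * u x + (u x) ^ 3 = ε * g x := by
    intro x
    have h1 : IntervalIntegrable (fun y => J (x - y) * u y) volume 0 1 := by
      rw [intervalIntegrable_iff_integrableOn_Ioc_of_le (by norm_num : (0:ℝ) ≤ 1)]
      refine Integrable.mono' (integrable_const (M * C))
        (((hJc.measurable.comp (measurable_const.sub measurable_id)).mul
          hum)).aestronglyMeasurable ?_
      filter_upwards with t
      rw [Real.norm_eq_abs, abs_mul]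
      exact mul_le_mul (hM _) (hC _) (abs_nonneg _) hM0
    have h2 : IntervalIntegrable (fun y => J (x - y) * u x) volume 0 1 :=
      ((hJc.comp (continuous_const.sub continuous_id)).mul continuous_const).intervalIntegrable 0 1
    have hsplit : (∫ y in (0:ℝ)..1, J (x - y) * (u y - u x)) = g x - u x := by
      have : (∫ y in (0:ℝ)..1, J (x - y) * (u y - u x))
          = (∫ y in (0:ℝ)..1, (J (x - y) * u y - J (x - y) * u x)) := by
        congr 1
        funext y
        ring
      rw [this, intervalIntegral.integral_sub h1 h2,
        intervalIntegral.integral_mul_const, hnorm x, one_mul, hg_def]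
    have := hss x
    rw [hsplit] at this
    nlinarith [this]
  -- the strictly monotone surjective map φ
  set φ : ℝ → ℝ := fun v => (ε - 1) * v + v ^ 3 with hφ_def
  have hφmono : StrictMono φ :=
    (strictMono_mul_left_of_pos (by linarith)).add
      (Odd.strictMono_pow (⟨1, by ring⟩ : Odd 3))
  have hφc : Continuous φ := by
    apply Continuous.add
    · exact continuous_const.mul continuous_id
    · exact continuous_pow 3
  have hφtop : Tendsto φ atTop atTop := by
    apply Filter.Tendsto.atTop_add_atTop
    · exact (tendsto_const_mul_atTop_of_pos (by linarith)).mpr tendsto_id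
    · exact tendsto_pow_atTop (by norm_num)
  have hφbot : Tendsto φ atBot atBot := by
    have h3 : Tendsto (fun v : ℝ => v ^ 3) atBot atBot := by
      have : Tendsto (fun v : ℝ => -((-v) ^ 3)) atBot atBot := by
        apply Filter.tendsto_neg_atTop_atBot.comp
        exact (tendsto_pow_atTop (by norm_num)).comp tendsto_neg_atBot_atTop
      refine this.congr fun v => by ring
    apply Filter.Tendsto.atBot_add_atBot _ h3
    have : Tendsto (fun v : ℝ => -((ε - 1) * (-v))) atBot atBot := by
      apply Filter.tendsto_neg_atTop_atBot.comp
      exact ((tendsto_const_mul_atTop_of_pos (by linarith)).mpr tendsto_id).comp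
        tendsto_neg_atBot_atTop
    refine this.congr fun v => by ring
  have hφsurj : Function.Surjective φ := hφc.surjective hφtop hφbot
  let e : ℝ ≃o ℝ := StrictMono.orderIsoOfSurjective φ hφmono hφsurj
  have heq : u = fun x => e.symm (ε * g x) := by
    funext x
    have : e (u x) = ε * g x := key x
    rw [← this, e.symm_apply_apply]
  rw [heq]
  exact e.toHomeomorph.symm.continuous.comp (continuous_const.mul hgc)
end
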